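/- Let a, b ∈ ℤ with a ≠ 0 and let G(x) = x⁸ + a·x⁶ + b·x⁴ + a·x² + 1. If there exists a prime q such that q² divides b+2−2a or q² divides b+2+2a, then G(x) is not monogenic. -/

import Mathlib

open Polynomial

/-- A monic polynomial `f ∈ ℤ[x]` is *monogenic* if it is irreducible over `ℚ` and,
for any number field `K` generated over `ℚ` by a root `θ` of `f`, the ring `ℤ[θ]`
is the full ring of integers (the integral closure of `ℤ`) of `K`. -/
def IsMonogenic (f : Polynomial ℤ) : Prop :=
  f.Monic ∧ Irreducible (f.map (Int.castRingHom ℚ)) ∧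
    ∀ (K : Type) [Field K] [NumberField K] (θ : K),
      Polynomial.aeval θ f = 0 →
      Algebra.adjoin ℚ {θ} = (⊤ : Subalgebra ℚ K) →
      Algebra.adjoin ℤ {θ} = integralClosure ℤ K

set_option maxHeartbeats 1000000 in
set_option synthInstance.maxHeartbeats 1000000 in
theorem aux_nonmono (a b q ε w : ℤ) (hqp : Prime q) (hε : ε = 1 ∨ ε = -1)
    (hW : b + 2 + 2 * a * ε = q ^ 2 * w) :
    ¬ IsMonogenic (X ^ 8 + C a * X ^ 6 + C b * X ^ 4 + C a * X ^ 2 + 1) := by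
  rintro ⟨hmonic, hirr, hK⟩
  set G : ℤ[X] := X ^ 8 + C a * X ^ 6 + C b * X ^ 4 + C a * X ^ 2 + 1 with hGdef
  set Gq : ℚ[X] := G.map (Int.castRingHom ℚ) with hGq
  haveI : Fact (Irreducible Gq) := ⟨hirr⟩
  let K := AdjoinRoot Gq
  haveI : CharZero K := charZero_of_injective_algebraMap (algebraMap ℚ K).injective
  have hGqne : Gq ≠ 0 := (hmonic.map (Int.castRingHom ℚ)).ne_zero
  haveI : FiniteDimensional ℚ K :=
    (AdjoinRoot.powerBasis hGqne).finite
  haveI : NumberField K := ⟨⟩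
  set θ : K := AdjoinRoot.root Gq with hθdef
  have halg : algebraMap ℤ ℚ = Int.castRingHom ℚ := rfl
  have hGθq : aeval θ Gq = 0 := by
    rw [hθdef]; exact (AdjoinRoot.aeval_eq Gq).trans AdjoinRoot.mk_self
  have hGθ : aeval θ G = 0 := by
    rw [← aeval_map_algebraMap ℚ θ G, halg, ← hGq]; exact hGθq
  have htop : Algebra.adjoin ℚ {θ} = (⊤ : Subalgebra ℚ K) := AdjoinRoot.adjoinRoot_eq_top
  have hA : Algebra.adjoin ℤ {θ} = integralClosure ℤ K := hK K θ hGθ htop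
  -- the auxiliary polynomials
  set k₂ : ℤ[X] := X ^ 4 + C (a + 2 * ε) * X ^ 2 + C (b + 2 * a * ε + 3) with hk₂
  set p : ℤ[X] := (X ^ 2 - C ε) * k₂ with hp
  set m : ℤ[X] := -C w * ((C (2 * ε)) * (X ^ 2 - C ε) + 1) * k₂ with hm
  -- basic value facts
  have hθ8 : θ ^ 8 + (a : K) * θ ^ 6 + (b : K) * θ ^ 4 + (a : K) * θ ^ 2 + 1 = 0 := by
    have := hGθ
    rw [hGdef] at this
    simpa using this
  have hW' : (b : K) + 2 + 2 * (a : K) * (ε : K) = (q : K) ^ 2 * (w : K) := by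
    have := congrArg (Int.castRingHom K) hW; simpa only [map_add, map_mul, map_pow, map_ofNat, eq_intCast] using this
  have hval : (aeval θ p) ^ 2 = (q : K) ^ 2 * aeval θ m := by
    rw [hp, hm, hk₂]
    simp only [map_add, map_sub, map_mul, map_pow, map_neg, map_one, aeval_X, aeval_C,
      algebraMap_int_eq, eq_intCast, map_intCast, map_ofNat]
    push_cast
    rcases hε with h | h <;> rw [h] at hW' ⊢ <;> push_cast at hW' ⊢
    · linear_combination (θ ^ 4 + ((a : K) + 2) * θ ^ 2 + ((b : K) + 2 * (a : K) + 3)) * hθ8 -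
        ((2 * (θ ^ 2 - 1) + 1) * (θ ^ 4 + ((a : K) + 2) * θ ^ 2 + ((b : K) + 2 * (a : K) + 3))) * hW'
    · linear_combination (θ ^ 4 + ((a : K) - 2) * θ ^ 2 + ((b : K) - 2 * (a : K) + 3)) * hθ8 -
        ((-2 * (θ ^ 2 + 1) + 1) * (θ ^ 4 + ((a : K) - 2) * θ ^ 2 + ((b : K) - 2 * (a : K) + 3))) * hW'
  have hq0 : (q : K) ≠ 0 := Int.cast_ne_zero.mpr hqp.ne_zero
  set γ : K := (q : K)⁻¹ * aeval θ p with hγdef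
  have hγsq : γ ^ 2 = aeval θ m := by
    rw [hγdef, mul_pow, hval, ← mul_assoc, inv_pow, inv_mul_cancel₀ (pow_ne_zero 2 hq0), one_mul]
  -- integrality of γ
  have hθint : IsIntegral ℤ θ := ⟨G, hmonic, by rw [← aeval_def]; exact hGθ⟩
  have hmem : aeval θ m ∈ Algebra.adjoin ℤ {θ} := by
    rw [Algebra.adjoin_singleton_eq_range_aeval]; exact ⟨m, rfl⟩
  haveI : Module.Finite ℤ (Algebra.adjoin ℤ {θ}) :=
    ⟨(Submodule.fg_top _).mpr hθint.fg_adjoin_singleton⟩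
  have hγA : IsIntegral (Algebra.adjoin ℤ {θ}) γ := by
    refine ⟨X ^ 2 - C (⟨aeval θ m, hmem⟩ : Algebra.adjoin ℤ {θ}),
      monic_X_pow_sub_C _ two_ne_zero, ?_⟩
    simp only [eval₂_sub, eval₂_X_pow, eval₂_C]
    rw [hγsq]
    exact sub_eq_zero_of_eq rfl
  have hγint : IsIntegral ℤ γ := isIntegral_trans γ hγA
  have hγmem : γ ∈ Algebra.adjoin ℤ {θ} := by rw [hA]; exact hγint
  obtain ⟨P, hP⟩ : ∃ P : ℤ[X], aeval θ P = γ := by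
    rw [Algebra.adjoin_singleton_eq_range_aeval] at hγmem; exact hγmem
  -- θ is a root of C q * P - p
  have hroot : aeval θ (C q * P - p) = 0 := by
    rw [map_sub, map_mul, aeval_C, hP, eq_intCast, hγdef,
      ← mul_assoc, mul_inv_cancel₀ hq0, one_mul, sub_self]
  -- hence G divides C q * P - p
  have hmin : minpoly ℚ θ = Gq :=
    (minpoly.eq_of_irreducible_of_monic hirr hGθq (hmonic.map _)).symm
  have hrz : (C q * P - p) %ₘ G = 0 := by
    by_contra h
    have hr0 : aeval θ ((C q * P - p) %ₘ G) = 0 := by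
      have h2 := modByMonic_add_div (C q * P - p) G
      have := congrArg (aeval θ) h2
      rw [map_add, map_mul, hGθ, zero_mul, add_zero] at this
      rw [this]; exact hroot
    have hmapne : ((C q * P - p) %ₘ G).map (Int.castRingHom ℚ) ≠ 0 :=
      (Polynomial.map_ne_zero_iff Int.cast_injective).mpr h
    have hle := minpoly.degree_le_of_ne_zero ℚ θ hmapne
      (by rw [← halg, aeval_map_algebraMap]; exact hr0)
    rw [hmin, hGq] at hle
    rw [degree_map_eq_of_injective Int.cast_injective,
      degree_map_eq_of_injective Int.cast_injective] at hle
    exact absurd hle (not_le.mpr (degree_modByMonic_lt _ hmonic))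
  obtain ⟨s, hs⟩ : G ∣ C q * P - p := (modByMonic_eq_zero_iff_dvd hmonic).mp hrz
  -- degree facts
  have hdegk₂ : degree k₂ ≤ 4 := by rw [hk₂]; compute_degree
  have hdegx2 : degree ((X : ℤ[X]) ^ 2 - C ε) ≤ 2 := by compute_degree
  have hdegp : degree p < degree G := by
    have h1 : degree p ≤ 6 := by
      rw [hp]
      refine (degree_mul_le _ _).trans ?_
      calc degree ((X:ℤ[X])^2 - C ε) + degree k₂ ≤ 2 + 4 := add_le_add hdegx2 hdegk₂
        _ = 6 := by rfl
    have h2 : degree G = 8 := by rw [hGdef]; compute_degree!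
    rw [h2]
    exact lt_of_le_of_lt h1 (by decide)
  -- p = C q * (P %ₘ G)
  have hpeq : p = C q * (P %ₘ G) := by
    have e1 : C q * (P %ₘ G) + G * (C q * (P /ₘ G)) = C q * P := by
      linear_combination (C q : ℤ[X]) * (modByMonic_add_div P G)
    have e2 : p + G * s = C q * P := by linear_combination -hs
    have d1 : degree (C q * (P %ₘ G)) < degree G := by
      refine lt_of_le_of_lt ?_ (degree_modByMonic_lt P hmonic)
      calc degree (C q * (P %ₘ G)) ≤ degree (C q) + degree (P %ₘ G) := degree_mul_le _ _
        _ ≤ 0 + degree (P %ₘ G) := add_le_add degree_C_le le_rfl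
        _ = degree (P %ₘ G) := zero_add _
    have u1 := div_modByMonic_unique (C q * (P /ₘ G)) (C q * (P %ₘ G)) hmonic ⟨e1, d1⟩
    have u2 := div_modByMonic_unique s p hmonic ⟨e2, hdegp⟩
    rw [← u2.2, u1.2]
  -- contradiction via leading coefficients
  have hpmonic : p.Monic := by
    rw [hp]
    refine (monic_X_pow_sub_C ε two_ne_zero).mul ?_
    rw [hk₂, add_assoc]
    refine monic_X_pow_add ?_
    have : degree (C (a + 2 * ε) * (X:ℤ[X]) ^ 2 + C (b + 2 * a * ε + 3)) ≤ 2 := by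
      compute_degree
    exact lt_of_le_of_lt this (by decide)
  have : (1 : ℤ) = q * (P %ₘ G).leadingCoeff := by
    have := congrArg leadingCoeff hpeq
    rwa [hpmonic.leadingCoeff, leadingCoeff_mul, leadingCoeff_C] at this
  exact hqp.not_isUnit (IsUnit.of_mul_eq_one (a := q) _ this.symm)

theorem stmt_1 (a b : ℤ) (ha : a ≠ 0)
    (hq : ∃ q : ℤ, Prime q ∧ (q ^ 2 ∣ (b + 2 - 2 * a) ∨ q ^ 2 ∣ (b + 2 + 2 * a))) :
    ¬ IsMonogenic (X ^ 8 + C a * X ^ 6 + C b * X ^ 4 + C a * X ^ 2 + 1) := by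
  obtain ⟨q, hqp, h⟩ := hq
  rcases h with ⟨w, hw⟩ | ⟨w, hw⟩
  · exact aux_nonmono a b q (-1) w hqp (Or.inr rfl) (by linarith)
  · exact aux_nonmono a b q 1 w hqp (Or.inl rfl) (by linarith)
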